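/- arXiv:2006.04335 — 9 statements merged into one kernel-verified Lean document; each statement's English description precedes it below -/
import Mathlib

section
/- Suppose the scale factor s is nonzero and that the camera–odometer constraint equations hold at every sampling time t ∈ ι, namely: ω(t)·y_C + s·v_x(t) − ω(t)·Y_l − β_l·ΔY·o_l(t) = 0, −ω(t)·x_C + s·v_y(t) + ω(t)·X_v = 0, and ω(t) + β_l·o_l(t) − β_r·o_r(t) = 0. Then the vector k = (Y_l − y_C, ΔY, X_v − x_C, 0, 0, s) ∈ ℝ⁶ is nonzero and satisfies D(t)·k = 0 for every t ∈ ι, where D(t) is the 3×6 matrix with rows (−ω(t), −β_l·o_l(t), 0, −ΔY·o_l(t), 0, v_x(t)), (0, 0, ω(t), 0, 0, v_y(t)), and (0, 0, 0, o_l(t), −o_r(t), 0). Consequently the stacked observability matrix obtained by collecting D(t) over all t ∈ ι does not have trivial kernel, i.e. it fails to have full column rank, so the parameter vector (Y_l, ΔY, X_v, β_l, β_r, s) is not locally identifiable from a monocular camera and wheel odometers. -/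
open Matrix

/-- With a nonzero visual scale `s` and the camera–odometer constraint
equations holding at every sampling time, the vector
`k = (Y_l − y_C, ΔY, X_v − x_C, 0, 0, s)` is a nonzero vector lying in the kernel of
every block `D(t)` of the observability matrix; hence the stacked observability matrix
does not have full column rank and `(Y_l, ΔY, X_v, β_l, β_r, s)` is not locally
identifiable from a monocular camera and wheel odometers. -/
theorem mono_odometer_full_params_not_identifiable
    {ι : Type*} (ω vx vy ol orr : ι → ℝ)
    (Yl ΔY Xv βl βr s xC yC : ℝ)
    (hs : s ≠ 0)
    (hcx : ∀ t, ω t * yC + s * vx t - ω t * Yl - βl * ΔY * ol t = 0)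
    (hcy : ∀ t, -(ω t) * xC + s * vy t + ω t * Xv = 0)
    (hcw : ∀ t, ω t + βl * ol t - βr * orr t = 0) :
    let k : Fin 6 → ℝ := ![Yl - yC, ΔY, Xv - xC, 0, 0, s]
    let D : ι → Matrix (Fin 3) (Fin 6) ℝ := fun t =>
      !![-(ω t), -(βl * ol t), 0, -(ΔY * ol t), 0, vx t;
         0,       0,           ω t, 0,          0, vy t;
         0,       0,           0,   ol t, -(orr t), 0]
    k ≠ 0 ∧ ∀ t, D t *ᵥ k = 0 := by
  intro k D
  constructor
  · intro h
    have : k 5 = 0 := by rw [h]; rfl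
    simp [k] at this
    exact hs this
  · intro t
    funext i
    fin_cases i <;>
      simp [D, k, Matrix.mulVec, dotProduct, Fin.sum_univ_six, Matrix.cons_val_succ, Matrix.cons_val_zero, show (5:Fin 6) = Fin.succ (Fin.succ (Fin.succ (Fin.succ (Fin.succ 0)))) from rfl] <;>
      nlinarith [hcx t, hcy t, hcw t]
end

section
/- Suppose s ≠ 0 and the parameter tuple (Y_l, ΔY, X_v, β_l, β_r, s) satisfies, for every sampling time t ∈ ι: ω(t)·y_C + s·v_x(t) − ω(t)·Y_l − β_l·ΔY·o_l(t) = 0, −ω(t)·x_C + s·v_y(t) + ω(t)·X_v = 0, and ω(t) + β_l·o_l(t) − β_r·o_r(t) = 0. Then for every λ ∈ ℝ, the parameter tuple ((1+λ/s)·Y_l − (λ/s)·y_C, (1+λ/s)·ΔY, (1+λ/s)·X_v − (λ/s)·x_C, β_l, β_r, s+λ) satisfies the same three constraint equations for every t ∈ ι. In particular the two parameter tuples are indistinguishable from the measurements. -/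
/-- If `s ≠ 0` and the parameter tuple `(Y_l, ΔY, X_v, β_l, β_r, s)`
satisfies the camera–odometer constraint equations at every sampling time, then for
every `λ ∈ ℝ` the tuple
`((1+λ/s)·Y_l − (λ/s)·y_C, (1+λ/s)·ΔY, (1+λ/s)·X_v − (λ/s)·x_C, β_l, β_r, s+λ)`
satisfies the same three constraint equations at every sampling time; the two tuples
are indistinguishable from the measurements. -/
theorem mono_odometer_indistinguishable_family
    {ι : Type*} (ω vx vy ol orr : ι → ℝ)
    (Yl ΔY Xv βl βr s xC yC : ℝ)
    (hs : s ≠ 0)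
    (hcx : ∀ t, ω t * yC + s * vx t - ω t * Yl - βl * ΔY * ol t = 0)
    (hcy : ∀ t, -(ω t) * xC + s * vy t + ω t * Xv = 0)
    (hcw : ∀ t, ω t + βl * ol t - βr * orr t = 0) :
    ∀ lam : ℝ, ∀ t,
      (ω t * yC + (s + lam) * vx t
          - ω t * ((1 + lam / s) * Yl - (lam / s) * yC)
          - βl * ((1 + lam / s) * ΔY) * ol t = 0) ∧
      (-(ω t) * xC + (s + lam) * vy t
          + ω t * ((1 + lam / s) * Xv - (lam / s) * xC) = 0) ∧
      (ω t + βl * ol t - βr * orr t = 0) := by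
  intro lam t
  refine ⟨?_, ?_, hcw t⟩
  · have h := hcx t
    field_simp
    linear_combination (s + lam) * h
  · have h := hcy t
    field_simp
    linear_combination (s + lam) * h
end

section
/- Assume s ≠ 0, ΔY ≠ 0, and that for every sampling time t ∈ ι the ICR-only camera–odometer constraints hold: ω(t)·y_C + s·v_x(t) − ω(t)·Y_l − o_l(t) = 0, −ω(t)·x_C + s·v_y(t) + ω(t)·X_v = 0, and ω(t) + (o_l(t) − o_r(t))/ΔY = 0. Then the following are equivalent: (a) the only vector k = (k₁,k₂,k₃,k₄) ∈ ℝ⁴ satisfying, for every t ∈ ι, −ω(t)·k₁ + v_x(t)·k₄ = 0, ω(t)·k₃ + v_y(t)·k₄ = 0, and ((o_r(t) − o_l(t))/ΔY²)·k₂ = 0, is k = 0; (b) the only vector k = (k₁,k₂,k₃,k₄) ∈ ℝ⁴ satisfying, for every t ∈ ι, −ω(t)·k₁ + o_l(t)·k₄ = 0, ω(t)·k₃ = 0, and (o_r(t) − o_l(t))·k₂ = 0, is k = 0. That is, the original observability matrix has full column rank if and only if the simplified observability matrix does. -/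
/-- Under the ICR-only camera–odometer constraints (with `s ≠ 0` and
`ΔY ≠ 0`), the original observability matrix has full column rank iff the simplified
(column-operated) observability matrix does: in each case, full column rank is
expressed as the corresponding per-time linear equations forcing `k = 0`. -/
theorem mono_odometer_icr_obs_matrix_rank_equiv
    {ι : Type*} (ω vx vy ol orr : ι → ℝ)
    (Yl ΔY Xv s xC yC : ℝ)
    (hs : s ≠ 0) (hΔY : ΔY ≠ 0)
    (hcx : ∀ t, ω t * yC + s * vx t - ω t * Yl - ol t = 0)
    (hcy : ∀ t, -(ω t) * xC + s * vy t + ω t * Xv = 0)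
    (hcw : ∀ t, ω t + (ol t - orr t) / ΔY = 0) :
    ((∀ k₁ k₂ k₃ k₄ : ℝ,
        (∀ t, -(ω t) * k₁ + vx t * k₄ = 0 ∧
              ω t * k₃ + vy t * k₄ = 0 ∧
              ((orr t - ol t) / ΔY ^ 2) * k₂ = 0) →
        k₁ = 0 ∧ k₂ = 0 ∧ k₃ = 0 ∧ k₄ = 0)
      ↔
      (∀ k₁ k₂ k₃ k₄ : ℝ,
        (∀ t, -(ω t) * k₁ + ol t * k₄ = 0 ∧
              ω t * k₃ = 0 ∧
              (orr t - ol t) * k₂ = 0) →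
        k₁ = 0 ∧ k₂ = 0 ∧ k₃ = 0 ∧ k₄ = 0)) := by
  constructor
  · intro h k₁ k₂ k₃ k₄ hk
    have key := h ((k₁ + (Yl - yC) * k₄) / s) k₂ ((k₃ - (xC - Xv) * k₄) / s) k₄ ?_
    · obtain ⟨h1, h2, h3, h4⟩ := key
      refine ⟨?_, h2, ?_, h4⟩
      · have h1' := (div_eq_zero_iff.mp h1).resolve_right hs
        rw [h4, mul_zero, add_zero] at h1'
        exact h1'
      · have h3' := (div_eq_zero_iff.mp h3).resolve_right hs
        rw [h4, mul_zero, sub_zero] at h3'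
        exact h3'
    · intro t
      obtain ⟨e1, e2, e3⟩ := hk t
      refine ⟨?_, ?_, ?_⟩
      · field_simp
        linear_combination e1 + k₄ * hcx t
      · field_simp
        linear_combination e2 + k₄ * hcy t
      · rw [div_mul_eq_mul_div, e3, zero_div]
  · intro h k₁ k₂ k₃ k₄ hk
    have key := h (s * k₁ - (Yl - yC) * k₄) k₂ (s * k₃ + (xC - Xv) * k₄) k₄ ?_
    · obtain ⟨h1, h2, h3, h4⟩ := key
      refine ⟨?_, h2, ?_, h4⟩
      · rw [h4, mul_zero, sub_zero] at h1
        exact (mul_eq_zero.mp h1).resolve_left hs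
      · rw [h4, mul_zero, add_zero] at h3
        exact (mul_eq_zero.mp h3).resolve_left hs
    · intro t
      obtain ⟨e1, e2, e3⟩ := hk t
      refine ⟨?_, ?_, ?_⟩
      · linear_combination s * e1 - k₄ * hcx t
      · linear_combination s * e2 - k₄ * hcy t
      · rw [div_mul_eq_mul_div, div_eq_zero_iff] at e3
        exact e3.resolve_right (pow_ne_zero 2 hΔY)
end

section
/- There exists a nonzero vector k = (k₁,k₂,k₃,k₄) ∈ ℝ⁴ satisfying, for every sampling time t ∈ ι: −ω(t)·k₁ + o_l(t)·k₄ = 0, ω(t)·k₃ = 0, and (o_r(t) − o_l(t))·k₂ = 0, if and only if at least one of the following degenerate conditions holds: (i) o_l(t) = 0 for all t ∈ ι; (ii) ω(t) = 0 for all t ∈ ι; (iii) ω, o_l, and o_r are all constant functions on ι; (iv) o_l(t) = o_r(t) for all t ∈ ι; (v) there exists λ ∈ ℝ with ω(t) = λ·o_l(t) for all t ∈ ι. -/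
/-- A nonzero vector `k ∈ ℝ⁴` annihilating every row of the simplified
camera–odometer (ICR-only) observability matrix exists iff one of the degenerate
motion conditions (i)–(v) holds. -/
theorem mono_odometer_icr_degenerate_characterization
    {ι : Type*} (ω ol orr : ι → ℝ) :
    (∃ k₁ k₂ k₃ k₄ : ℝ, ¬(k₁ = 0 ∧ k₂ = 0 ∧ k₃ = 0 ∧ k₄ = 0) ∧
        ∀ t, -(ω t) * k₁ + ol t * k₄ = 0 ∧
             ω t * k₃ = 0 ∧
             (orr t - ol t) * k₂ = 0)
      ↔
      ((∀ t, ol t = 0) ∨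
       (∀ t, ω t = 0) ∨
       (∃ c₁ c₂ c₃ : ℝ, ∀ t, ω t = c₁ ∧ ol t = c₂ ∧ orr t = c₃) ∨
       (∀ t, ol t = orr t) ∨
       (∃ lam : ℝ, ∀ t, ω t = lam * ol t)) := by
  constructor
  · rintro ⟨k₁, k₂, k₃, k₄, hne, h⟩
    by_cases hk₃ : k₃ = 0
    · by_cases hk₂ : k₂ = 0
      · by_cases hk₁ : k₁ = 0
        · have hk₄ : k₄ ≠ 0 := by
            intro hk₄; exact hne ⟨hk₁, hk₂, hk₃, hk₄⟩
          left
          intro t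
          have := (h t).1
          rw [hk₁] at this
          have : ol t * k₄ = 0 := by linarith
          exact (mul_eq_zero.mp this).resolve_right hk₄
        · right; right; right; right
          refine ⟨k₄ / k₁, fun t => ?_⟩
          have := (h t).1
          field_simp
          linarith [(h t).1]
      · right; right; right; left
        intro t
        have := (h t).2.2
        have : orr t - ol t = 0 := (mul_eq_zero.mp this).resolve_right hk₂
        linarith
    · right; left
      intro t
      exact (mul_eq_zero.mp (h t).2.1).resolve_right hk₃
  · rintro (h | h | ⟨c₁, c₂, c₃, h⟩ | h | ⟨lam, h⟩)
    · exact ⟨0, 0, 0, 1, by simp, fun t => by simp [h t]⟩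
    · exact ⟨1, 0, 0, 0, by simp, fun t => by simp [h t]⟩
    · by_cases hc₁ : c₁ = 0
      · exact ⟨0, 0, 1, 0, by simp, fun t => by simp [(h t).1, hc₁]⟩
      · refine ⟨c₂, 0, 0, c₁, fun hc => hc₁ hc.2.2.2, fun t => ?_⟩
        obtain ⟨h1, h2, h3⟩ := h t
        refine ⟨by rw [h1, h2]; ring, by rw [h1]; ring, by ring⟩
    · exact ⟨0, 1, 0, 0, by simp, fun t => by simp [h t]⟩
    · exact ⟨1, 0, 0, lam, by simp, fun t => by simp [h t]; ring⟩
end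

section
/- Assume s ≠ 0, ΔY ≠ 0, and that for every sampling time t ∈ ι the ICR-only camera–odometer constraints hold: ω(t)·y_C + s·v_x(t) − ω(t)·Y_l − o_l(t) = 0, −ω(t)·x_C + s·v_y(t) + ω(t)·X_v = 0, and ω(t) + (o_l(t) − o_r(t))/ΔY = 0. Then there exists a nonzero vector k = (k₁,k₂,k₃,k₄) ∈ ℝ⁴ satisfying, for every t ∈ ι, −ω(t)·k₁ + v_x(t)·k₄ = 0, ω(t)·k₃ + v_y(t)·k₄ = 0, and ((o_r(t) − o_l(t))/ΔY²)·k₂ = 0, if and only if at least one of the following degenerate conditions holds: (i) o_l(t) = 0 for all t; (ii) ω(t) = 0 for all t; (iii) ω, o_l, o_r are all constant functions on ι; (iv) o_l(t) = o_r(t) for all t; (v) there exists λ ∈ ℝ with ω(t) = λ·o_l(t) for all t. In particular, under general motion (none of (i)–(v)), the parameter vector (Y_l, ΔY, X_v, s) is locally identifiable from a monocular camera and wheel odometers. -/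
/-- Under the ICR-only camera–odometer constraints (with `s ≠ 0` and
`ΔY ≠ 0`), there exists a nonzero vector `k ∈ ℝ⁴` annihilating every row of the
observability matrix iff one of the degenerate conditions (i)–(v) holds; hence under
general motion the parameter vector `(Y_l, ΔY, X_v, s)` is locally identifiable from
a monocular camera and wheel odometers. -/
theorem mono_odometer_icr_identifiable_iff_nondegenerate
    {ι : Type*} (ω vx vy ol orr : ι → ℝ)
    (Yl ΔY Xv s xC yC : ℝ)
    (hs : s ≠ 0) (hΔY : ΔY ≠ 0)
    (hcx : ∀ t, ω t * yC + s * vx t - ω t * Yl - ol t = 0)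
    (hcy : ∀ t, -(ω t) * xC + s * vy t + ω t * Xv = 0)
    (hcw : ∀ t, ω t + (ol t - orr t) / ΔY = 0) :
    (∃ k₁ k₂ k₃ k₄ : ℝ, ¬(k₁ = 0 ∧ k₂ = 0 ∧ k₃ = 0 ∧ k₄ = 0) ∧
        ∀ t, -(ω t) * k₁ + vx t * k₄ = 0 ∧
             ω t * k₃ + vy t * k₄ = 0 ∧
             ((orr t - ol t) / ΔY ^ 2) * k₂ = 0)
      ↔
      ((∀ t, ol t = 0) ∨
       (∀ t, ω t = 0) ∨
       (∃ c₁ c₂ c₃ : ℝ, ∀ t, ω t = c₁ ∧ ol t = c₂ ∧ orr t = c₃) ∨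
       (∀ t, ol t = orr t) ∨
       (∃ lam : ℝ, ∀ t, ω t = lam * ol t)) := by
  have horr : ∀ t, orr t - ol t = ΔY * ω t := by
    intro t
    have h := hcw t
    field_simp at h
    linarith
  constructor
  · rintro ⟨k₁, k₂, k₃, k₄, hk, hall⟩
    by_cases hω : ∀ t, ω t = 0
    · exact Or.inr (Or.inl hω)
    · push_neg at hω
      obtain ⟨t₀, ht₀⟩ := hω
      by_cases hk₄ : k₄ = 0
      · exfalso
        have hk₂ : k₂ = 0 := by
          have h3 := (hall t₀).2.2
          rw [horr t₀] at h3
          rcases mul_eq_zero.mp h3 with h | h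
          · exfalso
            rw [div_eq_zero_iff] at h
            rcases h with h | h
            · rcases mul_eq_zero.mp h with h' | h'
              · exact hΔY h'
              · exact ht₀ h'
            · exact hΔY (pow_eq_zero_iff (by norm_num) |>.mp h)
          · exact h
        have h1 := (hall t₀).1
        have h2 := (hall t₀).2.1
        rw [hk₄] at h1 h2
        simp at h1 h2
        have hk₁ : k₁ = 0 := by
          rcases h1 with h | h
          · exact absurd h ht₀
          · exact h
        have hk₃ : k₃ = 0 := by
          rcases h2 with h | h
          · exact absurd h ht₀
          · exact h
        exact hk ⟨hk₁, hk₂, hk₃, hk₄⟩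
      · have key : ∀ t, ol t * k₄ = ω t * (s * k₁ - (Yl - yC) * k₄) := by
          intro t
          have h1 := (hall t).1
          have hx := hcx t
          linear_combination s * h1 - k₄ * hx
        by_cases hd : s * k₁ - (Yl - yC) * k₄ = 0
        · left
          intro t
          have h := key t
          rw [hd, mul_zero] at h
          exact (mul_eq_zero.mp h).resolve_right hk₄
        · right; right; right; right
          refine ⟨k₄ / (s * k₁ - (Yl - yC) * k₄), fun t => ?_⟩
          have h := key t
          field_simp
          rw [eq_div_iff (by intro h'; apply hd; linarith)]; linear_combination -h
  · rintro (h | h | ⟨c₁, c₂, c₃, h⟩ | h | ⟨lam, h⟩)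
    · -- (i) ol = 0
      refine ⟨Yl - yC, 0, -(xC - Xv), s, fun ⟨_, _, _, h4⟩ => hs h4, fun t => ?_⟩
      refine ⟨?_, ?_, mul_zero _⟩
      · linear_combination hcx t + h t
      · linear_combination hcy t
    · -- (ii) ω = 0
      refine ⟨1, 0, 0, 0, fun ⟨h1, _, _, _⟩ => one_ne_zero h1, fun t => ?_⟩
      refine ⟨by simp [h t], by simp, mul_zero _⟩
    · -- (iii) constants
      by_cases hc₁ : c₁ = 0
      · refine ⟨1, 0, 0, 0, fun ⟨h1, _, _, _⟩ => one_ne_zero h1, fun t => ?_⟩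
        refine ⟨by simp [(h t).1, hc₁], by simp, mul_zero _⟩
      · refine ⟨c₂ + c₁ * (Yl - yC), 0, -(c₁ * (xC - Xv)), c₁ * s,
          fun ⟨_, _, _, h4⟩ => mul_ne_zero hc₁ hs h4, fun t => ?_⟩
        obtain ⟨h1, h2, h3⟩ := h t
        have hx := hcx t
        have hy := hcy t
        rw [h1, h2] at hx
        rw [h1] at hy
        refine ⟨?_, ?_, mul_zero _⟩
        · rw [h1]; linear_combination c₁ * hx
        · rw [h1]; linear_combination c₁ * hy
    · -- (iv) ol = orr
      have hω : ∀ t, ω t = 0 := by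
        intro t
        have := horr t
        rw [h t] at this
        simp at this
        rcases this with h' | h'
        · exact absurd h' hΔY
        · exact h'
      refine ⟨1, 0, 0, 0, fun ⟨h1, _, _, _⟩ => one_ne_zero h1, fun t => ?_⟩
      refine ⟨by simp [hω t], by simp, mul_zero _⟩
    · -- (v) ω = lam • ol
      refine ⟨1 + lam * (Yl - yC), 0, -(lam * (xC - Xv)), lam * s, ?_, fun t => ?_⟩
      · rintro ⟨h1, _, _, h4⟩
        have hlam : lam = 0 := by
          rcases mul_eq_zero.mp h4 with h' | h'
          · exact h'
          · exact absurd h' hs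
        rw [hlam] at h1
        simp at h1
      · refine ⟨?_, ?_, mul_zero _⟩
        · linear_combination lam * hcx t - h t
        · linear_combination lam * hcy t - (lam * (xC - Xv) + lam * xC - lam * Xv) * (h t - h t)
end

section
/- There exists a nonzero vector k = (k₁,k₂,k₃,k₄,k₅) ∈ ℝ⁵ satisfying, for every sampling time t ∈ ι: −ω(t)·k₁ + o_l(t)·k₂ = 0, ω(t)·k₃ = 0, and o_l(t)·k₄ − o_r(t)·k₅ = 0, if and only if at least one of the following degenerate conditions holds: (i) o_l(t) = 0 for all t ∈ ι, or o_r(t) = 0 for all t ∈ ι; (ii) ω(t) = 0 for all t ∈ ι; (iii) ω, o_l, and o_r are all constant functions on ι; (iv) there exists λ ∈ ℝ with o_r(t) = λ·o_l(t) for all t ∈ ι; (v) there exists λ ∈ ℝ with ω(t) = λ·o_l(t) for all t ∈ ι. -/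
/-- A nonzero vector `k ∈ ℝ⁵` annihilating every row of the
column-reduced camera–IMU–odometer observability matrix exists iff one of the
degenerate motion conditions (i)–(v) holds. -/
theorem vio_reduced_degenerate_characterization
    {ι : Type*} (ω ol orr : ι → ℝ) :
    (∃ k₁ k₂ k₃ k₄ k₅ : ℝ, ¬(k₁ = 0 ∧ k₂ = 0 ∧ k₃ = 0 ∧ k₄ = 0 ∧ k₅ = 0) ∧
        ∀ t, -(ω t) * k₁ + ol t * k₂ = 0 ∧
             ω t * k₃ = 0 ∧
             ol t * k₄ - orr t * k₅ = 0)
      ↔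
      (((∀ t, ol t = 0) ∨ (∀ t, orr t = 0)) ∨
       (∀ t, ω t = 0) ∨
       (∃ c₁ c₂ c₃ : ℝ, ∀ t, ω t = c₁ ∧ ol t = c₂ ∧ orr t = c₃) ∨
       (∃ lam : ℝ, ∀ t, orr t = lam * ol t) ∨
       (∃ lam : ℝ, ∀ t, ω t = lam * ol t)) := by
  constructor
  · rintro ⟨k₁, k₂, k₃, k₄, k₅, hk, h⟩
    by_cases h3 : k₃ = 0
    · by_cases h1 : k₁ = 0
      · by_cases h2 : k₂ = 0
        · by_cases h5 : k₅ = 0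
          · by_cases h4 : k₄ = 0
            · exact absurd ⟨h1, h2, h3, h4, h5⟩ hk
            · -- ol t * k₄ = 0, so ol = 0
              refine Or.inl (Or.inl fun t => ?_)
              have := (h t).2.2
              rw [h5, mul_zero, sub_zero] at this
              exact (mul_eq_zero.1 this).resolve_right h4
          · -- orr = (k₄/k₅) ol
            refine Or.inr (Or.inr (Or.inr (Or.inl ⟨k₄ / k₅, fun t => ?_⟩)))
            have := (h t).2.2
            field_simp
            linarith
        · -- ol t * k₂ = 0, so ol = 0
          refine Or.inl (Or.inl fun t => ?_)
          have := (h t).1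
          rw [h1, mul_zero, zero_add] at this
          exact (mul_eq_zero.1 this).resolve_right h2
      · -- ω = (k₂/k₁) ol
        refine Or.inr (Or.inr (Or.inr (Or.inr ⟨k₂ / k₁, fun t => ?_⟩)))
        have := (h t).1
        field_simp
        linarith
    · refine Or.inr (Or.inl fun t => ?_)
      have := (h t).2.1
      exact (mul_eq_zero.1 this).resolve_right h3
  · rintro ((hl | hr) | hw | ⟨c₁, c₂, c₃, hc⟩ | ⟨lam, hlam⟩ | ⟨lam, hlam⟩)
    · exact ⟨0, 1, 0, 0, 0, by simp, fun t => by simp [hl t]⟩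
    · exact ⟨0, 0, 0, 0, 1, by simp, fun t => by simp [hr t]⟩
    · exact ⟨0, 0, 1, 0, 0, by simp, fun t => by simp [hw t]⟩
    · by_cases h1 : c₁ = 0
      · exact ⟨0, 0, 1, 0, 0, by simp, fun t => by simp [(hc t).1, h1]⟩
      · refine ⟨c₂, c₁, 0, c₃, c₂, fun h => h1 h.2.1, fun t => ?_⟩
        obtain ⟨e1, e2, e3⟩ := hc t
        refine ⟨by rw [e1, e2]; ring, by ring, by rw [e2, e3]; ring⟩
    · exact ⟨0, 0, 0, lam, 1, by simp, fun t => ⟨by ring, by ring, by rw [hlam t]; ring⟩⟩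
    · exact ⟨1, lam, 0, 0, 0, by simp, fun t => ⟨by rw [hlam t]; ring, by ring, by ring⟩⟩
end

section
/- Assume β_l ≠ 0 and let ΔY ∈ ℝ be arbitrary. Then there exists a nonzero vector k = (k₁,k₂,k₃,k₄,k₅) ∈ ℝ⁵ satisfying, for every sampling time t ∈ ι: −ω(t)·k₁ − β_l·o_l(t)·k₂ − ΔY·o_l(t)·k₄ = 0, ω(t)·k₃ = 0, and o_l(t)·k₄ − o_r(t)·k₅ = 0, if and only if at least one of the following degenerate conditions holds: (i) o_l(t) = 0 for all t, or o_r(t) = 0 for all t; (ii) ω(t) = 0 for all t; (iii) ω, o_l, o_r are all constant functions on ι; (iv) there exists λ ∈ ℝ with o_r(t) = λ·o_l(t) for all t; (v) there exists λ ∈ ℝ with ω(t) = λ·o_l(t) for all t. In particular, under general motion (none of (i)–(v)) the full kinematic parameter vector (Y_l, ΔY, X_v, β_l, β_r) is locally identifiable from a monocular camera, an IMU, and wheel odometers. -/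
/-- With `β_l ≠ 0` and arbitrary `ΔY`, there exists a nonzero vector
`k ∈ ℝ⁵` annihilating every row of the visual–inertial–odometric observability matrix
for the full kinematic parameter vector iff one of the degenerate conditions (i)–(v)
holds; hence under general motion `(Y_l, ΔY, X_v, β_l, β_r)` is locally identifiable
from a monocular camera, an IMU, and wheel odometers. -/
theorem vio_full_params_identifiable_iff_nondegenerate
    {ι : Type*} (ω ol orr : ι → ℝ)
    (βl ΔY : ℝ) (hβl : βl ≠ 0) :
    (∃ k₁ k₂ k₃ k₄ k₅ : ℝ, ¬(k₁ = 0 ∧ k₂ = 0 ∧ k₃ = 0 ∧ k₄ = 0 ∧ k₅ = 0) ∧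
        ∀ t, -(ω t) * k₁ - βl * ol t * k₂ - ΔY * ol t * k₄ = 0 ∧
             ω t * k₃ = 0 ∧
             ol t * k₄ - orr t * k₅ = 0)
      ↔
      (((∀ t, ol t = 0) ∨ (∀ t, orr t = 0)) ∨
       (∀ t, ω t = 0) ∨
       (∃ c₁ c₂ c₃ : ℝ, ∀ t, ω t = c₁ ∧ ol t = c₂ ∧ orr t = c₃) ∨
       (∃ lam : ℝ, ∀ t, orr t = lam * ol t) ∨
       (∃ lam : ℝ, ∀ t, ω t = lam * ol t)) := by
  constructor
  · rintro ⟨k₁, k₂, k₃, k₄, k₅, hk, h⟩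
    by_contra H
    push_neg at H
    obtain ⟨⟨⟨tl, htl⟩, ⟨tr, htr⟩⟩, ⟨tw, htw⟩, hconst, hiv, hv⟩ := H
    have hk3 : k₃ = 0 := by
      rcases mul_eq_zero.mp (h tw).2.1 with h1 | h2
      · exact absurd h1 htw
      · exact h2
    have hk5 : k₅ = 0 := by
      by_contra h5
      obtain ⟨t, ht⟩ := hiv (k₄ / k₅)
      apply ht
      have := (h t).2.2
      field_simp
      linarith
    have hk4 : k₄ = 0 := by
      have := (h tl).2.2
      rw [hk5] at this
      have h' : ol tl * k₄ = 0 := by linarith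
      rcases mul_eq_zero.mp h' with h1 | h2
      · exact absurd h1 htl
      · exact h2
    by_cases h1 : k₁ = 0
    · have := (h tl).1
      rw [h1, hk4] at this
      have h' : βl * ol tl * k₂ = 0 := by linarith
      rcases mul_eq_zero.mp h' with h2 | h2
      · rcases mul_eq_zero.mp h2 with h3 | h3
        · exact absurd h3 hβl
        · exact absurd h3 htl
      · exact hk ⟨h1, h2, hk3, hk4, hk5⟩
    · obtain ⟨t, ht⟩ := hv (-(βl * k₂) / k₁)
      apply ht
      have := (h t).1
      rw [hk4] at this
      field_simp
      linarith
  · rintro ((hol | horr) | hω | ⟨c₁, c₂, c₃, hc⟩ | ⟨lam, hlam⟩ | ⟨lam, hlam⟩)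
    · exact ⟨0, 1, 0, 0, 0, by simp, fun t => by simp [hol t]⟩
    · exact ⟨0, 0, 0, 0, 1, by simp, fun t => by simp [horr t]⟩
    · exact ⟨0, 0, 1, 0, 0, by simp, fun t => by simp [hω t]⟩
    · by_cases hc₁ : c₁ = 0
      · exact ⟨0, 0, 1, 0, 0, by simp, fun t => by simp [(hc t).1, hc₁]⟩
      · refine ⟨βl * c₂, -c₁, 0, 0, 0, ?_, fun t => ?_⟩
        · intro ⟨_, h2, _⟩
          exact hc₁ (by linarith [neg_eq_zero.mp h2])
        · obtain ⟨h1, h2, h3⟩ := hc t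
          rw [h1, h2]
          refine ⟨by ring, by ring, by ring⟩
    · refine ⟨0, -(ΔY * lam) / βl, 0, lam, 1, by simp, fun t => ?_⟩
      rw [hlam t]
      refine ⟨by field_simp; ring, by ring, by ring⟩
    · refine ⟨βl, -lam, 0, 0, 0, fun ⟨h1, _⟩ => hβl h1, fun t => ?_⟩
      rw [hlam t]
      refine ⟨by ring, by ring, by ring⟩
end

section
/- Let ω, o_l, o_r : ι → ℝ and real parameters β_l, ΔY be arbitrary, and for each sampling time t ∈ ι consider the 3×8 block D(t) of the observability matrix for joint estimation of the kinematic parameters and the camera–odometer extrinsic translation, with rows (−ω(t), −β_l·o_l(t), 0, −ΔY·o_l(t), 0, 0, ω(t), 0), (0, 0, ω(t), 0, 0, −ω(t), 0, 0), and (0, 0, 0, o_l(t), −o_r(t), 0, 0, 0). Then the three vectors k₁ = (1,0,0,0,0,0,1,0), k₂ = (0,0,1,0,0,1,0,0), and k₃ = (0,0,0,0,0,0,0,1) are linearly independent and satisfy D(t)·kᵢ = 0 for every t ∈ ι and i ∈ {1,2,3}. Consequently the stacked observability matrix has column rank at most 5, so the joint parameter vector (Y_l, ΔY, X_v, β_l,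 β_r, x_C, y_C, z_C) is not locally identifiable: Y_l is indistinguishable from y_C, X_v is indistinguishable from x_C, and z_C is unidentifiable. -/
open Matrix


private lemma cv5 {α : Type*} (a b c d e f g h : α) :
    (![a,b,c,d,e,f,g,h] : Fin 8 → α) 5 = f := rfl
private lemma cv6 {α : Type*} (a b c d e f g h : α) :
    (![a,b,c,d,e,f,g,h] : Fin 8 → α) 6 = g := rfl
private lemma cv7 {α : Type*} (a b c d e f g h : α) :
    (![a,b,c,d,e,f,g,h] : Fin 8 → α) 7 = h := rfl

/-- For the observability matrix of joint estimation of the kinematic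
parameters `(Y_l, ΔY, X_v, β_l, β_r)` and the camera–odometer extrinsic translation
`(x_C, y_C, z_C)`, the three vectors `k₁ = (1,0,0,0,0,0,1,0)`, `k₂ = (0,0,1,0,0,1,0,0)`,
`k₃ = (0,0,0,0,0,0,0,1)` are linearly independent and lie in the kernel of every block
`D(t)`; hence the stacked observability matrix has column rank at most 5 and the joint
parameter vector is not locally identifiable. -/
theorem joint_extrinsic_translation_not_identifiable
    {ι : Type*} (ω ol orr : ι → ℝ) (βl ΔY : ℝ) :
    let D : ι → Matrix (Fin 3) (Fin 8) ℝ := fun t =>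
      !![-(ω t), -(βl * ol t), 0, -(ΔY * ol t), 0,        0,      ω t, 0;
         0,       0,           ω t, 0,          0,      -(ω t),   0,   0;
         0,       0,           0,   ol t,     -(orr t),   0,      0,   0]
    let k : Fin 3 → (Fin 8 → ℝ) :=
      ![![1, 0, 0, 0, 0, 0, 1, 0],
        ![0, 0, 1, 0, 0, 1, 0, 0],
        ![0, 0, 0, 0, 0, 0, 0, 1]]
    LinearIndependent ℝ k ∧ ∀ (t : ι) (i : Fin 3), D t *ᵥ k i = 0 := by
  intro D k
  constructor
  · rw [Fintype.linearIndependent_iff]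
    intro g hg i
    have h0 := congrFun hg (0 : Fin 8)
    have h2 := congrFun hg (2 : Fin 8)
    have h7 := congrFun hg (7 : Fin 8)
    simp [k, Fin.sum_univ_three, cv5, cv6, cv7, Matrix.vecHead, Matrix.vecTail] at h0 h2 h7
    fin_cases i <;> assumption
  · intro t i
    funext j
    fin_cases i <;> fin_cases j <;>
      simp [D, k, mulVec, dotProduct, Fin.sum_univ_eight, cv5, cv6, cv7]
end

section
/- Suppose the parameter tuple (Y_l, ΔY, X_v, β_l, β_r, x_C, y_C) satisfies, for every sampling time t ∈ ι, the camera–IMU–odometer constraints with online extrinsic translation: ω(t)·y_C + a(t) − ω(t)·Y_l − β_l·ΔY·o_l(t) = 0, −ω(t)·x_C + b(t) + ω(t)·X_v = 0, and ω(t) + β_l·o_l(t) − β_r·o_r(t) = 0, where a(t) and b(t) denote the first and second components of the camera velocity rotated into the odometer frame. Then for all δ₁, δ₂ ∈ ℝ, the shifted parameter tuple (Y_l + δ₁, ΔY, X_v + δ₂, β_l, β_r, x_C + δ₂, y_C + δ₁) satisfies the same three constraint equations for every t ∈ ι; moreover the constraints do not involve z_C at all, so any value of the vertical extrinsic translation is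 consistent with the measurements. -/
/-- The camera–IMU–odometer constraint equations when the camera–odometer extrinsic
translation `(x_C, y_C, z_C)` is estimated online; note `z_C` does not appear in any
of the equations. -/
def extrinsicConstraints {ι : Type*} (ω ol orr a b : ι → ℝ)
    (Yl ΔY Xv βl βr xC yC _zC : ℝ) : Prop :=
  ∀ t : ι,
    (ω t * yC + a t - ω t * Yl - βl * ΔY * ol t = 0) ∧
    (-(ω t) * xC + b t + ω t * Xv = 0) ∧
    (ω t + βl * ol t - βr * orr t = 0)

/-- If `(Y_l, ΔY, X_v, β_l, β_r, x_C, y_C, z_C)` satisfies the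
camera–IMU–odometer constraints with online extrinsic translation at every sampling
time, then for all shifts `δ₁, δ₂ ∈ ℝ` (and any vertical translation `z_C'`, which the
constraints never involve), the shifted tuple
`(Y_l + δ₁, ΔY, X_v + δ₂, β_l, β_r, x_C + δ₂, y_C + δ₁, z_C')` satisfies the same
constraints at every sampling time. -/
theorem extrinsic_translation_shift_indistinguishable
    {ι : Type*} (ω ol orr a b : ι → ℝ)
    (Yl ΔY Xv βl βr xC yC zC : ℝ)
    (h : extrinsicConstraints ω ol orr a b Yl ΔY Xv βl βr xC yC zC) :
    ∀ δ₁ δ₂ zC' : ℝ,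
      extrinsicConstraints ω ol orr a b
        (Yl + δ₁) ΔY (Xv + δ₂) βl βr (xC + δ₂) (yC + δ₁) zC' := by
  intro δ₁ δ₂ zC' t
  obtain ⟨h1, h2, h3⟩ := h t
  refine ⟨?_, ?_, h3⟩ <;> linarith [h1, h2]
end
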